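/- Let Ω = ((Ψ_n, M_n, P_n))_{n∈ℕ} be an admissible module-sequence, i.e. max{B_n, B_n L_n² R_n²} ≤ 1 for all n ≥ 1. Then the feature extractor Φ_Ω is well-defined and non-expansive at the origin: for every f ∈ L²(ℝ^d), |||Φ_Ω(f)|||² = Σ_{n≥0} Σ_{q∈Λ₁^n} ‖(U[q]f)∗χ_n‖₂² ≤ ‖f‖₂², so in particular Φ_Ω(f) has finite feature-space norm. -/

import Mathlib

open MeasureTheory
open scoped ENNReal FourierTransform

noncomputable section

/-- ℝ^d as a Euclidean space. -/
abbrev Ed (d : ℕ) : Type := EuclideanSpace ℝ (Fin d)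

/-- Convolution (f ∗ g)(x) = ∫ f(y) g(x − y) dy. -/
def convol {d : ℕ} (f g : Ed d → ℂ) : Ed d → ℂ := fun x => ∫ y, f y * g (x - y)

/-- One network layer: U[λ]f = S^{d/2} · P(M(f ∗ g))(S·). -/
def layerU {d : ℕ} (S : ℝ) (P M : (Ed d → ℂ) → (Ed d → ℂ)) (g : Ed d → ℂ)
    (f : Ed d → ℂ) : Ed d → ℂ :=
  fun x => ((S ^ ((d : ℝ) / 2) : ℝ) : ℂ) * P (M (convol f g)) (S • x)

/-- Iterated layer operators along a path q = (λ₁, …, λ_n):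
U[q]f = U_n[λ_n] ⋯ U₁[λ₁] f. -/
def pathU {d : ℕ} (Λ : ℕ → Type) (g : (n : ℕ) → Λ n → Ed d → ℂ)
    (M P : ℕ → (Ed d → ℂ) → (Ed d → ℂ)) (S : ℕ → ℝ) (n : ℕ)
    (q : (k : Fin n) → Λ k.1) (f : Ed d → ℂ) : Ed d → ℂ :=
  Fin.foldl n (fun h k => layerU (S k.1) (P k.1) (M k.1) (g k.1 (q k)) h) f

/-! ### Auxiliary lemmas -/

lemma convol_aesm {d : ℕ} {f g : Ed d → ℂ} (hf : AEStronglyMeasurable f volume)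
    (hg : AEStronglyMeasurable g volume) : AEStronglyMeasurable (convol f g) volume := by
  have h := (hf.convolution_integrand (ContinuousLinearMap.mul ℂ ℂ) hg).integral_prod_right'
  exact h

/-- Young's inequality `‖f ∗ g‖₂ ≤ ‖g‖₁ ‖f‖₂`. -/
lemma convol_eLpNorm_le {d : ℕ} {f g : Ed d → ℂ} (hf : AEStronglyMeasurable f volume)
    (hg : AEStronglyMeasurable g volume) :
    eLpNorm (convol f g) 2 volume ≤ eLpNorm g 1 volume * eLpNorm f 2 volume := by
  rcases eq_or_ne (eLpNorm f 2 volume) 0 with hf0 | hf0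
  · have hfz : f =ᵐ[volume] 0 := (eLpNorm_eq_zero_iff hf (by norm_num)).mp hf0
    have : convol f g = 0 := by
      funext x
      have : (fun y => f y * g (x - y)) =ᵐ[volume] 0 := by
        filter_upwards [hfz] with y hy; simp [hy]
      simp [convol, integral_congr_ae this]
    simp [this]
  rcases eq_or_ne (eLpNorm g 1 volume) ⊤ with hgt | hgt
  · rw [hgt]; exact le_top.trans_eq (ENNReal.top_mul hf0).symm
  obtain ⟨F, hFm, hFe⟩ : ∃ F : Ed d → ℝ≥0∞, Measurable F ∧
      (fun y => (‖f y‖₊ : ℝ≥0∞)) =ᵐ[volume] F :=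
    ⟨hf.enorm.mk _, hf.enorm.measurable_mk, hf.enorm.ae_eq_mk⟩
  obtain ⟨G, hGm, hGe⟩ : ∃ G : Ed d → ℝ≥0∞, Measurable G ∧
      (fun y => (‖g y‖₊ : ℝ≥0∞)) =ᵐ[volume] G :=
    ⟨hg.enorm.mk _, hg.enorm.measurable_mk, hg.enorm.ae_eq_mk⟩
  set Ig := ∫⁻ y, G y with hIg
  set If := ∫⁻ y, F y ^ (2:ℝ) with hIf
  have hEg : eLpNorm g 1 volume = Ig := by
    rw [eLpNorm_one_eq_lintegral_enorm]; exact lintegral_congr_ae hGe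
  have hEf : eLpNorm f 2 volume = If ^ (1/2:ℝ) := by
    rw [eLpNorm_eq_lintegral_rpow_enorm_toReal (by norm_num) (by norm_num)]
    simp only [ENNReal.toReal_ofNat]
    congr 1
    refine lintegral_congr_ae ?_
    filter_upwards [hFe] with y hy
    simp only [enorm_eq_nnnorm]
    rw [hy]
  have hIgt : Ig ≠ ⊤ := by rw [hEg] at hgt; exact hgt
  have hinner : ∀ x : Ed d, (‖convol f g x‖₊ : ℝ≥0∞) ≤
      (∫⁻ y, F y ^ (2:ℝ) * G (x - y)) ^ (1/2:ℝ) * Ig ^ (1/2:ℝ) := by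
    intro x
    have e1 : (‖convol f g x‖₊ : ℝ≥0∞) ≤ ∫⁻ y, (‖f y‖₊ : ℝ≥0∞) * (‖g (x - y)‖₊ : ℝ≥0∞) := by
      refine (enorm_integral_le_lintegral_enorm _).trans_eq ?_
      refine lintegral_congr fun y => ?_
      simp [enorm_eq_nnnorm, nnnorm_mul]
    have hGx : (fun y => (‖g (x - y)‖₊ : ℝ≥0∞)) =ᵐ[volume] (fun y => G (x - y)) :=
      (Measure.measurePreserving_sub_left volume x).quasiMeasurePreserving.ae_eq_comp hGe
    have e2 : ∫⁻ y, (‖f y‖₊ : ℝ≥0∞) * (‖g (x - y)‖₊ : ℝ≥0∞) = ∫⁻ y, F y * G (x - y) := by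
      refine lintegral_congr_ae ?_
      filter_upwards [hFe, hGx] with y h1 h2
      rw [h1, h2]
    have hG' : Measurable fun y : Ed d => G (x - y) := hGm.comp (measurable_id.const_sub x)
    have e3 : ∫⁻ y, F y * G (x - y) ≤
        (∫⁻ y, F y ^ (2:ℝ) * G (x - y)) ^ (1/2:ℝ) * (∫⁻ y, G (x - y)) ^ (1/2:ℝ) := by
      have h22 : Real.HolderConjugate 2 2 := Real.HolderConjugate.two_two
      have hH := ENNReal.lintegral_mul_le_Lp_mul_Lq volume h22
        (f := fun y => F y * G (x - y) ^ (1/2:ℝ)) (g := fun y => G (x - y) ^ (1/2:ℝ))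
        ((hFm.mul (hG'.pow_const _)).aemeasurable) ((hG'.pow_const _).aemeasurable)
      have lhs_eq : ∫⁻ y, ((fun y => F y * G (x - y) ^ (1/2:ℝ)) * fun y => G (x - y) ^ (1/2:ℝ)) y
          = ∫⁻ y, F y * G (x - y) := by
        refine lintegral_congr fun y => ?_
        simp only [Pi.mul_apply]
        rw [mul_assoc, ← ENNReal.rpow_add_of_nonneg _ _ (by norm_num) (by norm_num)]
        norm_num
      have r1 : ∀ y, (F y * G (x - y) ^ (1/2:ℝ)) ^ (2:ℝ) = F y ^ (2:ℝ) * G (x - y) := by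
        intro y
        rw [ENNReal.mul_rpow_of_nonneg _ _ (by norm_num), ← ENNReal.rpow_mul]
        norm_num
      have r2 : ∀ y, (G (x - y) ^ (1/2:ℝ)) ^ (2:ℝ) = G (x - y) := by
        intro y; rw [← ENNReal.rpow_mul]; norm_num
      rw [lhs_eq] at hH
      calc ∫⁻ y, F y * G (x - y) ≤ _ := hH
        _ = (∫⁻ y, F y ^ (2:ℝ) * G (x - y)) ^ (1/2:ℝ) * (∫⁻ y, G (x - y)) ^ (1/2:ℝ) := by
            rw [lintegral_congr fun y => r1 y, lintegral_congr fun y => r2 y]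
    have e4 : ∫⁻ y, G (x - y) = Ig :=
      (Measure.measurePreserving_sub_left volume x).lintegral_comp hGm
    calc (‖convol f g x‖₊ : ℝ≥0∞) ≤ _ := e1
      _ = ∫⁻ y, F y * G (x - y) := e2
      _ ≤ _ := e3
      _ = (∫⁻ y, F y ^ (2:ℝ) * G (x - y)) ^ (1/2:ℝ) * Ig ^ (1/2:ℝ) := by rw [e4]
  have hKm : Measurable fun p : Ed d × Ed d => F p.2 ^ (2:ℝ) * G (p.1 - p.2) :=
    ((hFm.comp measurable_snd).pow_const _).mul (hGm.comp (measurable_fst.sub measurable_snd))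
  have hswap : ∫⁻ x, ∫⁻ y, F y ^ (2:ℝ) * G (x - y) = If * Ig := by
    rw [lintegral_lintegral_swap hKm.aemeasurable]
    have : ∀ y : Ed d, ∫⁻ x, F y ^ (2:ℝ) * G (x - y) = F y ^ (2:ℝ) * Ig := by
      intro y
      have hGy : Measurable fun x : Ed d => G (x - y) := hGm.comp (measurable_id.sub_const y)
      rw [lintegral_const_mul _ hGy]
      congr 1
      exact (measurePreserving_sub_right volume y).lintegral_comp hGm
    rw [lintegral_congr this, lintegral_mul_const'' _ (hFm.pow_const _).aemeasurable]
  have houter : ∫⁻ x, (‖convol f g x‖₊ : ℝ≥0∞) ^ (2:ℝ) ≤ If * Ig * Ig := by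
    have step : ∀ x : Ed d, (‖convol f g x‖₊ : ℝ≥0∞) ^ (2:ℝ) ≤
        (∫⁻ y, F y ^ (2:ℝ) * G (x - y)) * Ig := by
      intro x
      calc (‖convol f g x‖₊ : ℝ≥0∞) ^ (2:ℝ)
          ≤ ((∫⁻ y, F y ^ (2:ℝ) * G (x - y)) ^ (1/2:ℝ) * Ig ^ (1/2:ℝ)) ^ (2:ℝ) :=
            ENNReal.rpow_le_rpow (hinner x) (by norm_num)
        _ = (∫⁻ y, F y ^ (2:ℝ) * G (x - y)) * Ig := by
            rw [ENNReal.mul_rpow_of_nonneg _ _ (by norm_num), ← ENNReal.rpow_mul,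
              ← ENNReal.rpow_mul]
            norm_num
    calc ∫⁻ x, (‖convol f g x‖₊ : ℝ≥0∞) ^ (2:ℝ)
        ≤ ∫⁻ x, (∫⁻ y, F y ^ (2:ℝ) * G (x - y)) * Ig := lintegral_mono step
      _ = (∫⁻ x, ∫⁻ y, F y ^ (2:ℝ) * G (x - y)) * Ig := by
          rw [lintegral_mul_const' _ _ hIgt]
      _ = If * Ig * Ig := by rw [hswap]
  have : eLpNorm (convol f g) 2 volume = (∫⁻ x, (‖convol f g x‖₊ : ℝ≥0∞) ^ (2:ℝ)) ^ (1/2:ℝ) := by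
    rw [eLpNorm_eq_lintegral_rpow_enorm_toReal (by norm_num) (by norm_num)]
    simp only [enorm_eq_nnnorm]
    norm_num
  rw [this, hEg, hEf]
  calc (∫⁻ x, (‖convol f g x‖₊ : ℝ≥0∞) ^ (2:ℝ)) ^ (1/2:ℝ)
      ≤ (If * Ig * Ig) ^ (1/2:ℝ) := ENNReal.rpow_le_rpow houter (by norm_num)
    _ = Ig * If ^ (1/2:ℝ) := by
        rw [ENNReal.mul_rpow_of_nonneg _ _ (by norm_num),
          ENNReal.mul_rpow_of_nonneg _ _ (by norm_num)]
        rw [show If ^ (1/2:ℝ) * Ig ^ (1/2:ℝ) * Ig ^ (1/2:ℝ) =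
            Ig ^ (1/2:ℝ) * Ig ^ (1/2:ℝ) * If ^ (1/2:ℝ) by ring,
          ← ENNReal.rpow_add_of_nonneg _ _ (by norm_num) (by norm_num)]
        norm_num

lemma convol_memL2 {d : ℕ} {f g : Ed d → ℂ} (hf : MemLp f 2 volume)
    (hg : MemLp g 1 volume) : MemLp (convol f g) 2 volume :=
  ⟨convol_aesm hf.1 hg.1, lt_of_le_of_lt (convol_eLpNorm_le hf.1 hg.1)
    (ENNReal.mul_lt_top hg.2 hf.2)⟩

/-- The layer operator preserves the `L²` norm of its "inner" part. -/
lemma eLpNorm_layerU {d : ℕ} (S' : ℝ) (hS : 1 ≤ S') (P' M' : (Ed d → ℂ) → Ed d → ℂ)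
    (g' h : Ed d → ℂ) (hF : MemLp (P' (M' (convol h g'))) 2 volume) :
    MemLp (layerU S' P' M' g' h) 2 volume ∧
    eLpNorm (layerU S' P' M' g' h) 2 volume = eLpNorm (P' (M' (convol h g'))) 2 volume := by
  set F := P' (M' (convol h g')) with hFdef
  have hS0 : (0:ℝ) < S' := zero_lt_one.trans_le hS
  have hSne : S' ≠ 0 := ne_of_gt hS0
  set c : ℂ := ((S' ^ ((d:ℝ)/2) : ℝ) : ℂ) with hc
  set κ : ℝ≥0∞ := ENNReal.ofReal |(S' ^ d)⁻¹| with hκ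
  have hmap : Measure.map (fun x : Ed d => S' • x) volume = κ • volume := by
    rw [hκ, abs_inv, abs_pow]; simpa using Measure.map_addHaar_smul (volume : Measure (Ed d)) hSne
  have hqmp : Measure.QuasiMeasurePreserving (fun x : Ed d => S' • x) volume volume :=
    Measure.quasiMeasurePreserving_smul volume hSne
  have hTm : Measurable (fun x : Ed d => S' • x) := measurable_id.const_smul S'
  have hcomp : AEStronglyMeasurable (fun x : Ed d => F (S' • x)) volume :=
    hF.1.comp_quasiMeasurePreserving hqmp
  have heq : layerU S' P' M' g' h = c • (fun x : Ed d => F (S' • x)) := rfl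
  have hFsm : AEStronglyMeasurable F (Measure.map (fun x : Ed d => S' • x) volume) := by
    rw [hmap]; exact hF.1.mono_ac (Measure.AbsolutelyContinuous.rfl.smul_left κ)
  have h1 : eLpNorm (fun x : Ed d => F (S' • x)) 2 volume = κ ^ (1/2:ℝ) * eLpNorm F 2 volume := by
    have e1 := eLpNorm_map_measure (p := (2:ℝ≥0∞)) hFsm hTm.aemeasurable
    have e2 : eLpNorm F 2 (Measure.map (fun x : Ed d => S' • x) volume)
        = κ ^ (1/2:ℝ) * eLpNorm F 2 volume := by
      have hκ0 : κ ≠ 0 := (ENNReal.ofReal_pos.mpr (by positivity)).ne'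
      rw [hmap, eLpNorm_smul_measure_of_ne_zero hκ0, smul_eq_mul]
      congr 1
      norm_num
    rw [← e2, e1]
    rfl
  have hnorm : ‖c‖ₑ * κ ^ (1/2:ℝ) = 1 := by
    have hcpos : (0:ℝ) < S' ^ ((d:ℝ)/2) := Real.rpow_pos_of_pos hS0 _
    have hnc : ‖c‖ₑ = ENNReal.ofReal (S' ^ ((d:ℝ)/2)) := by
      rw [← ofReal_norm, hc, Complex.norm_real, Real.norm_eq_abs,
        abs_of_pos hcpos]
    have hκ' : κ = ENNReal.ofReal ((S' ^ d)⁻¹) := by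
      rw [hκ, abs_of_pos (by positivity)]
    have hκr : κ ^ (1/2:ℝ) = ENNReal.ofReal (((S' ^ d)⁻¹) ^ (1/2:ℝ)) := by
      rw [hκ', ENNReal.ofReal_rpow_of_pos (by positivity)]
    rw [hnc, hκr, ← ENNReal.ofReal_mul hcpos.le]
    have hreal : S' ^ ((d:ℝ)/2) * ((S' ^ d)⁻¹) ^ (1/2:ℝ) = 1 := by
      rw [← Real.rpow_natCast S' d, ← Real.rpow_neg hS0.le, ← Real.rpow_mul hS0.le,
        ← Real.rpow_add hS0]
      have : (d:ℝ)/2 + -(d:ℝ) * (1/2) = 0 := by ring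
      rw [this, Real.rpow_zero]
    rw [hreal, ENNReal.ofReal_one]
  have h2 : eLpNorm (layerU S' P' M' g' h) 2 volume = eLpNorm F 2 volume := by
    rw [heq, eLpNorm_const_smul, h1, ← mul_assoc, hnorm, one_mul]
  exact ⟨⟨by rw [heq]; exact hcomp.const_smul c, by rw [h2]; exact hF.2⟩, h2⟩

def pathEquiv (Λ : ℕ → Type) (n : ℕ) :
    (Λ n × ((k : Fin n) → Λ k.1)) ≃ ((k : Fin (n + 1)) → Λ k.1) where
  toFun p := Fin.snoc (α := fun i : Fin (n + 1) => Λ i.1) p.2 p.1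
  invFun Q := (Q (Fin.last n), fun k => Q k.castSucc)
  left_inv p := by
    refine Prod.ext ?_ ?_
    · simp
    · funext k; simp
  right_inv Q := by
    funext i
    refine Fin.lastCases ?_ (fun j => ?_) i <;> simp

lemma pathU_zero {d : ℕ} (Λ : ℕ → Type) (g : (n : ℕ) → Λ n → Ed d → ℂ)
    (M P : ℕ → (Ed d → ℂ) → (Ed d → ℂ)) (S : ℕ → ℝ) (q : (k : Fin 0) → Λ k.1)
    (f : Ed d → ℂ) : pathU Λ g M P S 0 q f = f := by
  simp [pathU]

lemma pathU_succ {d : ℕ} (Λ : ℕ → Type) (g : (n : ℕ) → Λ n → Ed d → ℂ)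
    (M P : ℕ → (Ed d → ℂ) → (Ed d → ℂ)) (S : ℕ → ℝ) (n : ℕ)
    (q : (k : Fin (n + 1)) → Λ k.1) (f : Ed d → ℂ) :
    pathU Λ g M P S (n + 1) q f =
      layerU (S n) (P n) (M n) (g n (q (Fin.last n)))
        (pathU Λ g M P S n (fun k => q k.castSucc) f) := by
  unfold pathU
  rw [Fin.foldl_succ_last]
  simp only [Fin.val_last, Fin.coe_castSucc]

lemma pathU_snoc {d : ℕ} (Λ : ℕ → Type) (g : (n : ℕ) → Λ n → Ed d → ℂ)
    (M P : ℕ → (Ed d → ℂ) → (Ed d → ℂ)) (S : ℕ → ℝ) (n : ℕ)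
    (q : (k : Fin n) → Λ k.1) (lam : Λ n) (f : Ed d → ℂ) :
    pathU Λ g M P S (n + 1) (pathEquiv Λ n (lam, q)) f =
      layerU (S n) (P n) (M n) (g n lam) (pathU Λ g M P S n q f) := by
  rw [pathU_succ]
  simp only [pathEquiv, Equiv.coe_fn_mk, Fin.snoc_last, Fin.snoc_castSucc]

/-- For an admissible module-sequence, the feature extractor is well-defined:
the feature-space norm satisfies |||Φ(f)|||² ≤ ‖f‖₂², and is in particular finite. -/
theorem stmt_6 {d : ℕ}
    {Λ : ℕ → Type} [∀ n, Countable (Λ n)]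
    (g : (n : ℕ) → Λ n → Ed d → ℂ) (χ : ℕ → Ed d → ℂ)
    (A B L R S : ℕ → ℝ)
    (M P : ℕ → (Ed d → ℂ) → (Ed d → ℂ))
    (hg1 : ∀ n lam, MemLp (g n lam) 1 volume) (hg2 : ∀ n lam, MemLp (g n lam) 2 volume)
    (hχ1 : ∀ n, MemLp (χ n) 1 volume) (hχ2 : ∀ n, MemLp (χ n) 2 volume)
    (hA : ∀ n, 0 < A n) (hB : ∀ n, 0 < B n) (hL : ∀ n, 0 ≤ L n) (hR : ∀ n, 0 ≤ R n)
    (hS : ∀ n, 1 ≤ S n)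
    (hframe : ∀ (n : ℕ) (f : Ed d → ℂ), MemLp f 2 volume →
      ENNReal.ofReal (A n) * eLpNorm f 2 volume ^ 2 ≤
          eLpNorm (convol f (χ n)) 2 volume ^ 2 +
            ∑' lam : Λ n, eLpNorm (convol f (g n lam)) 2 volume ^ 2 ∧
        eLpNorm (convol f (χ n)) 2 volume ^ 2 +
            ∑' lam : Λ n, eLpNorm (convol f (g n lam)) 2 volume ^ 2 ≤
          ENNReal.ofReal (B n) * eLpNorm f 2 volume ^ 2)
    (hMmem : ∀ (n : ℕ) (f : Ed d → ℂ), MemLp f 2 volume → MemLp (M n f) 2 volume)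
    (hPmem : ∀ (n : ℕ) (f : Ed d → ℂ), MemLp f 2 volume → MemLp (P n f) 2 volume)
    (hMlip : ∀ (n : ℕ) (f h : Ed d → ℂ), MemLp f 2 volume → MemLp h 2 volume →
      eLpNorm (M n f - M n h) 2 volume ≤ ENNReal.ofReal (L n) * eLpNorm (f - h) 2 volume)
    (hPlip : ∀ (n : ℕ) (f h : Ed d → ℂ), MemLp f 2 volume → MemLp h 2 volume →
      eLpNorm (P n f - P n h) 2 volume ≤ ENNReal.ofReal (R n) * eLpNorm (f - h) 2 volume)
    (hM0 : ∀ n, M n 0 = 0) (hP0 : ∀ n, P n 0 = 0)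
    (hadm : ∀ n, max (B n) (B n * L n ^ 2 * R n ^ 2) ≤ 1) :
    ∀ f : Ed d → ℂ, MemLp f 2 volume →
      (∑' n : ℕ, ∑' (q : (k : Fin n) → Λ k.1),
          eLpNorm (convol (pathU Λ g M P S n q f) (χ n)) 2 volume ^ 2) ≤
        eLpNorm f 2 volume ^ 2 ∧
      (∑' n : ℕ, ∑' (q : (k : Fin n) → Λ k.1),
          eLpNorm (convol (pathU Λ g M P S n q f) (χ n)) 2 volume ^ 2) < ⊤ := by
  intro f hf
  -- single-layer estimate
  have hlayer : ∀ (n : ℕ) (lam : Λ n) (h : Ed d → ℂ), MemLp h 2 volume →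
      MemLp (layerU (S n) (P n) (M n) (g n lam) h) 2 volume ∧
      eLpNorm (layerU (S n) (P n) (M n) (g n lam) h) 2 volume ≤
        ENNReal.ofReal (L n) * ENNReal.ofReal (R n) *
          eLpNorm (convol h (g n lam)) 2 volume := by
    intro n lam h hh
    have hc : MemLp (convol h (g n lam)) 2 volume := convol_memL2 hh (hg1 n lam)
    have hMc := hMmem n _ hc
    have hPc := hPmem n _ hMc
    obtain ⟨hmem, heq⟩ := eLpNorm_layerU (S n) (hS n) (P n) (M n) (g n lam) h hPc
    refine ⟨hmem, heq.trans_le ?_⟩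
    have h1 : eLpNorm (P n (M n (convol h (g n lam)))) 2 volume ≤
        ENNReal.ofReal (R n) * eLpNorm (M n (convol h (g n lam))) 2 volume := by
      have := hPlip n (M n (convol h (g n lam))) 0 hMc MemLp.zero
      simpa [hP0 n] using this
    have h2 : eLpNorm (M n (convol h (g n lam))) 2 volume ≤
        ENNReal.ofReal (L n) * eLpNorm (convol h (g n lam)) 2 volume := by
      have := hMlip n (convol h (g n lam)) 0 hc MemLp.zero
      simpa [hM0 n] using this
    calc eLpNorm (P n (M n (convol h (g n lam)))) 2 volume
        ≤ ENNReal.ofReal (R n) *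
            (ENNReal.ofReal (L n) * eLpNorm (convol h (g n lam)) 2 volume) :=
          h1.trans (mul_le_mul_right h2 _)
      _ = ENNReal.ofReal (L n) * ENNReal.ofReal (R n) *
            eLpNorm (convol h (g n lam)) 2 volume := by ring
  -- path outputs are in L²
  have hu : ∀ (n : ℕ) (q : (k : Fin n) → Λ k.1), MemLp (pathU Λ g M P S n q f) 2 volume := by
    intro n
    induction n with
    | zero => intro q; rw [pathU_zero]; exact hf
    | succ n ih =>
      intro q
      rw [pathU_succ]
      exact (hlayer n (q (Fin.last n)) _ (ih _)).1
  set b : ℕ → ℝ≥0∞ := fun n => ∑' (q : (k : Fin n) → Λ k.1),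
    eLpNorm (convol (pathU Λ g M P S n q f) (χ n)) 2 volume ^ 2 with hb
  set a : ℕ → ℝ≥0∞ := fun n => ∑' (q : (k : Fin n) → Λ k.1),
    eLpNorm (pathU Λ g M P S n q f) 2 volume ^ 2 with ha
  -- key one-step estimate
  have key : ∀ n, b n + a (n + 1) ≤ a n := by
    intro n
    set C : ℝ≥0∞ := ENNReal.ofReal (L n ^ 2 * R n ^ 2) with hC
    have hsplit : a (n + 1) = ∑' (q : (k : Fin n) → Λ k.1), ∑' (lam : Λ n),
        eLpNorm (layerU (S n) (P n) (M n) (g n lam) (pathU Λ g M P S n q f)) 2 volume ^ 2 := by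
      simp only [ha]
      rw [← (pathEquiv Λ n).tsum_eq
        (f := fun Q => eLpNorm (pathU Λ g M P S (n + 1) Q f) 2 volume ^ 2)]
      rw [ENNReal.tsum_prod', ENNReal.tsum_comm]
      exact tsum_congr fun q => tsum_congr fun lam => by rw [pathU_snoc]
    have hmax : max 1 C * ENNReal.ofReal (B n) ≤ 1 := by
      have h1 : B n ≤ 1 := le_trans (le_max_left _ _) (hadm n)
      have h2 : B n * L n ^ 2 * R n ^ 2 ≤ 1 := le_trans (le_max_right _ _) (hadm n)
      rcases le_total C 1 with hCle | hCge
      · rw [max_eq_left hCle, one_mul]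
        exact ENNReal.ofReal_le_one.mpr h1
      · rw [max_eq_right hCge, hC, ← ENNReal.ofReal_mul (by positivity)]
        exact ENNReal.ofReal_le_one.mpr (by nlinarith)
    have step1 : ∀ q : (k : Fin n) → Λ k.1,
        eLpNorm (convol (pathU Λ g M P S n q f) (χ n)) 2 volume ^ 2 +
          (∑' (lam : Λ n),
            eLpNorm (layerU (S n) (P n) (M n) (g n lam) (pathU Λ g M P S n q f)) 2 volume ^ 2) ≤
        max 1 C * (ENNReal.ofReal (B n) * eLpNorm (pathU Λ g M P S n q f) 2 volume ^ 2) := by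
      intro q
      have hC1 : (∑' (lam : Λ n),
          eLpNorm (layerU (S n) (P n) (M n) (g n lam) (pathU Λ g M P S n q f)) 2 volume ^ 2) ≤
          C * ∑' (lam : Λ n),
            eLpNorm (convol (pathU Λ g M P S n q f) (g n lam)) 2 volume ^ 2 := by
        rw [← ENNReal.tsum_mul_left]
        refine ENNReal.tsum_le_tsum fun lam => ?_
        have h0 := (hlayer n lam _ (hu n q)).2
        have hsq : eLpNorm (layerU (S n) (P n) (M n) (g n lam) (pathU Λ g M P S n q f))
              2 volume ^ 2 ≤
            (ENNReal.ofReal (L n) * ENNReal.ofReal (R n) *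
              eLpNorm (convol (pathU Λ g M P S n q f) (g n lam)) 2 volume) ^ 2 := by
          rw [pow_two, pow_two]; exact mul_le_mul' h0 h0
        refine hsq.trans_eq ?_
        rw [mul_pow, mul_pow, ← ENNReal.ofReal_pow (hL n), ← ENNReal.ofReal_pow (hR n),
          ← ENNReal.ofReal_mul (by positivity), hC]
      calc eLpNorm (convol (pathU Λ g M P S n q f) (χ n)) 2 volume ^ 2 +
            (∑' (lam : Λ n),
              eLpNorm (layerU (S n) (P n) (M n) (g n lam) (pathU Λ g M P S n q f)) 2 volume ^ 2)
          ≤ eLpNorm (convol (pathU Λ g M P S n q f) (χ n)) 2 volume ^ 2 +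
            C * ∑' (lam : Λ n),
              eLpNorm (convol (pathU Λ g M P S n q f) (g n lam)) 2 volume ^ 2 :=
            add_le_add_right hC1 _
        _ ≤ max 1 C * eLpNorm (convol (pathU Λ g M P S n q f) (χ n)) 2 volume ^ 2 +
            max 1 C * ∑' (lam : Λ n),
              eLpNorm (convol (pathU Λ g M P S n q f) (g n lam)) 2 volume ^ 2 :=
            add_le_add (le_mul_of_one_le_left' (le_max_left 1 C))
              (mul_le_mul_left (le_max_right 1 C) _)
        _ = max 1 C * (eLpNorm (convol (pathU Λ g M P S n q f) (χ n)) 2 volume ^ 2 +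
            ∑' (lam : Λ n),
              eLpNorm (convol (pathU Λ g M P S n q f) (g n lam)) 2 volume ^ 2) := by
            rw [mul_add]
        _ ≤ max 1 C * (ENNReal.ofReal (B n) * eLpNorm (pathU Λ g M P S n q f) 2 volume ^ 2) :=
            mul_le_mul_right (hframe n (pathU Λ g M P S n q f) (hu n q)).2 _
    calc b n + a (n + 1)
        = ∑' (q : (k : Fin n) → Λ k.1),
            (eLpNorm (convol (pathU Λ g M P S n q f) (χ n)) 2 volume ^ 2 +
              ∑' (lam : Λ n),
                eLpNorm (layerU (S n) (P n) (M n) (g n lam) (pathU Λ g M P S n q f))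
                  2 volume ^ 2) := by
          simp only [hb, hsplit]
          exact ENNReal.tsum_add.symm
      _ ≤ ∑' (q : (k : Fin n) → Λ k.1),
            max 1 C * (ENNReal.ofReal (B n) * eLpNorm (pathU Λ g M P S n q f) 2 volume ^ 2) :=
          ENNReal.tsum_le_tsum step1
      _ = max 1 C * ENNReal.ofReal (B n) * a n := by
          simp only [ha]
          rw [ENNReal.tsum_mul_left, ENNReal.tsum_mul_left, ← mul_assoc]
      _ ≤ 1 * a n := mul_le_mul_left hmax _
      _ = a n := one_mul _
  have ha0 : a 0 = eLpNorm f 2 volume ^ 2 := by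
    simp only [ha]
    haveI : Unique ((k : Fin 0) → Λ k.1) := Pi.uniqueOfIsEmpty _
    rw [tsum_eq_single default (fun b' hb' => (hb' (Subsingleton.elim b' default)).elim)]
    rw [pathU_zero]
  have hN : ∀ N : ℕ, (∑ n ∈ Finset.range N, b n) + a N ≤ a 0 := by
    intro N
    induction N with
    | zero => simp
    | succ N ih =>
      rw [Finset.sum_range_succ, add_assoc]
      exact le_trans (add_le_add_right (key N) _) ih
  have htot : (∑' n : ℕ, b n) ≤ eLpNorm f 2 volume ^ 2 := by
    rw [ENNReal.tsum_eq_iSup_nat, ← ha0]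
    exact iSup_le fun N => le_trans le_self_add (hN N)
  exact ⟨htot, htot.trans_lt (ENNReal.pow_lt_top hf.2 (n := 2))⟩
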